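/- arXiv:math/0511108 — 4 statements merged into one kernel-verified Lean document; each statement's English description precedes it below -/
import Mathlib

section
/- Let h be a complex-valued function defined and C¹ on a neighborhood of 0 in ℂ with h(0) = 0, and fix ζ ∈ 𝔻. Define φ(z) = −log(1 − |(ζ − h(z))/(conj(h(z))·ζ − 1)|²) for z in a neighborhood of 0 (shrinking the neighborhood so that |h(z)| < 1). Then the Wirtinger derivative of φ at z = 0 satisfies (∂φ/∂z)(0) = −conj((∂h/∂z̄)(0))·ζ − (∂h/∂z)(0)·conj(ζ). In particular, viewing (∂φ/∂z)(0) as a function of ζ ∈ 𝔻, its Wirtinger derivative ∂/∂ζ̄ is the constant −(∂h/∂z)(0). -/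
open Complex

/-- Wirtinger derivative `∂f/∂z = (1/2)(∂f/∂x − i·∂f/∂y)` of `f : ℂ → ℂ` (viewing `ℂ`
as `ℝ²`), where `∂f/∂x` (resp. `∂f/∂y`) is the real directional derivative in the
direction `1` (resp. `i`). -/
noncomputable def wirtingerZ (f : ℂ → ℂ) (z : ℂ) : ℂ :=
  (1 / 2) * (fderiv ℝ f z 1 - Complex.I * fderiv ℝ f z Complex.I)

/-- Wirtinger derivative `∂f/∂z̄ = (1/2)(∂f/∂x + i·∂f/∂y)`. -/
noncomputable def wirtingerZbar (f : ℂ → ℂ) (z : ℂ) : ℂ :=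
  (1 / 2) * (fderiv ℝ f z 1 + Complex.I * fderiv ℝ f z Complex.I)

lemma aux_normSq (w ζ : ℂ) :
    normSq ((starRingEnd ℂ) w * ζ - 1) - normSq (ζ - w) = (1 - normSq w) * (1 - normSq ζ) := by
  simp [Complex.normSq_apply, Complex.mul_re, Complex.mul_im, Complex.sub_re, Complex.sub_im,
    Complex.conj_re, Complex.conj_im, Complex.one_re, Complex.one_im]
  ring

lemma aux_log (w ζ : ℂ) (hw : ‖w‖ < 1) (hζ : ‖ζ‖ < 1) :
    -Real.log (1 - ‖(ζ - w) / ((starRingEnd ℂ) w * ζ - 1)‖ ^ 2) =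
      Real.log (normSq ((starRingEnd ℂ) w * ζ - 1)) - Real.log (1 - normSq w)
        - Real.log (1 - normSq ζ) := by
  have hw1 : normSq w < 1 := by
    rw [← Complex.sq_norm]
    nlinarith [norm_nonneg w]
  have hζ1 : normSq ζ < 1 := by
    rw [← Complex.sq_norm]
    nlinarith [norm_nonneg ζ]
  have hd : (starRingEnd ℂ) w * ζ - 1 ≠ 0 := by
    intro hcon
    have h1 : (starRingEnd ℂ) w * ζ = 1 := by linear_combination hcon
    have : ‖(starRingEnd ℂ) w * ζ‖ < 1 := by
      rw [norm_mul, RCLike.norm_conj]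
      nlinarith [norm_nonneg w, norm_nonneg ζ]
    rw [h1] at this; simp at this
  have hdpos : 0 < normSq ((starRingEnd ℂ) w * ζ - 1) := normSq_pos.2 hd
  have key : 1 - ‖(ζ - w) / ((starRingEnd ℂ) w * ζ - 1)‖ ^ 2 =
      ((1 - normSq w) * (1 - normSq ζ)) / normSq ((starRingEnd ℂ) w * ζ - 1) := by
    rw [← aux_normSq w ζ, norm_div, div_pow,
      Complex.sq_norm, Complex.sq_norm]
    field_simp
    have hd' : normSq (ζ * (starRingEnd ℂ) w - 1) ≠ 0 := by rw [mul_comm]; exact hdpos.ne'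
    rw [sub_div, div_self hd']
  rw [key, Real.log_div (by nlinarith) hdpos.ne',
    Real.log_mul (by nlinarith) (by nlinarith)]
  ring

lemma part1 (U : Set ℂ) (hU : IsOpen U) (h0U : (0 : ℂ) ∈ U)
    (h : ℂ → ℂ) (hC1 : ContDiffOn ℝ 1 h U) (hh0 : h 0 = 0)
    (ζ : ℂ) (hζ : ‖ζ‖ < 1) :
    wirtingerZ (fun z : ℂ =>
        ((-Real.log (1 - ‖(ζ - h z) / ((starRingEnd ℂ) (h z) * ζ - 1)‖ ^ 2) : ℝ) : ℂ)) 0 =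
      -(starRingEnd ℂ) (wirtingerZbar h 0) * ζ - wirtingerZ h 0 * (starRingEnd ℂ) ζ := by
  have hdiff : DifferentiableAt ℝ h 0 :=
    (hC1.differentiableOn one_ne_zero).differentiableAt (hU.mem_nhds h0U)
  set A := fderiv ℝ h 0 with hAdef
  have hA : HasFDerivAt h A 0 := hdiff.hasFDerivAt
  have hcont : ContinuousAt h 0 := hdiff.continuousAt
  have hsmall : ∀ᶠ z in nhds (0 : ℂ), ‖h z‖ < 1 := by
    have hb : ∀ᶠ w in nhds (h 0), ‖w‖ < 1 := by
      rw [hh0]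
      filter_upwards [Metric.ball_mem_nhds (0 : ℂ) one_pos] with w hw
      simpa using hw
    exact hcont.eventually hb
  -- eventual equality with the log-decomposed function
  have heq : (fun z : ℂ =>
        ((-Real.log (1 - ‖(ζ - h z) / ((starRingEnd ℂ) (h z) * ζ - 1)‖ ^ 2) : ℝ) : ℂ))
      =ᶠ[nhds (0 : ℂ)]
      (fun z : ℂ => ((Real.log (normSq ((starRingEnd ℂ) (h z) * ζ - 1))
        - Real.log (1 - normSq (h z)) - Real.log (1 - normSq ζ) : ℝ) : ℂ)) := by
    filter_upwards [hsmall] with z hz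
    exact_mod_cast congrArg (fun t : ℝ => (t : ℂ)) (aux_log (h z) ζ hz hζ)
  -- derivative of conj ∘ h
  have hconj : HasFDerivAt (fun z => (starRingEnd ℂ) (h z))
      ((conjCLE : ℂ →L[ℝ] ℂ).comp A) 0 := by
    have := ((conjCLE : ℂ →L[ℝ] ℂ).hasFDerivAt (x := h 0)).comp 0 hA
    simpa [Function.comp_def] using this
  have hg1 := (hconj.mul_const' ζ).sub_const 1
  have hre1 := (Complex.reCLM.hasFDerivAt (x := (starRingEnd ℂ) (h 0) * ζ - 1)).comp 0 hg1
  have him1 := (Complex.imCLM.hasFDerivAt (x := (starRingEnd ℂ) (h 0) * ζ - 1)).comp 0 hg1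
  rw [Function.comp_def] at hre1 him1
  simp only [Complex.reCLM_apply, Complex.imCLM_apply] at hre1 him1
  have hn1 := (hre1.mul hre1).add (him1.mul him1)
  simp only [Pi.add_def, Pi.mul_def, ← Complex.normSq_apply] at hn1
  have hn1zero : normSq ((starRingEnd ℂ) (h 0) * ζ - 1) = 1 := by simp [hh0]
  have hlog1 := (Real.hasDerivAt_log (by simp [hh0])).comp_hasFDerivAt 0 hn1
  have hre2 := (Complex.reCLM.hasFDerivAt (x := h 0)).comp 0 hA
  have him2 := (Complex.imCLM.hasFDerivAt (x := h 0)).comp 0 hA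
  rw [Function.comp_def] at hre2 him2
  simp only [Complex.reCLM_apply, Complex.imCLM_apply] at hre2 him2
  have hn2 := ((hre2.mul hre2).add (him2.mul him2)).const_sub 1
  simp only [Pi.add_def, Pi.mul_def, ← Complex.normSq_apply] at hn2
  have hn2zero : 1 - normSq (h 0) = 1 := by simp [hh0]
  have hlog2 := (Real.hasDerivAt_log (by simp [hh0])).comp_hasFDerivAt 0 hn2
  have hψ := (hlog1.sub hlog2).sub_const (Real.log (1 - normSq ζ))
  have hφR := (Complex.ofRealCLM.hasFDerivAt).comp 0 hψ
  rw [Function.comp_def] at hφR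
  have hφ := hφR.congr_of_eventuallyEq heq
  rw [wirtingerZ, hφ.fderiv, wirtingerZ, wirtingerZbar, ← hAdef]
  simp only [ContinuousLinearMap.comp_apply, ContinuousLinearMap.add_apply,
    ContinuousLinearMap.smul_apply, ContinuousLinearMap.sub_apply,
    ContinuousLinearMap.coe_smul', Pi.smul_apply, ContinuousLinearMap.smulRight_apply,
    ContinuousLinearMap.neg_apply, Complex.reCLM_apply, Complex.imCLM_apply,
    Complex.ofRealCLM_apply, ContinuousLinearEquiv.coe_coe, Complex.conjCLE_apply, hh0, hn1zero, hn2zero]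
  set u := A 1
  set v := A Complex.I
  simp only [map_zero, zero_mul, zero_sub, Complex.normSq_zero, sub_zero, smul_eq_mul,
    Complex.zero_re, Complex.zero_im, inv_one, one_smul]
  rw [Complex.ext_iff]
  constructor <;>
    simp [Complex.normSq_apply, Complex.mul_re, Complex.mul_im, Complex.add_re, Complex.add_im,
      Complex.sub_re, Complex.sub_im, Complex.conj_re, Complex.conj_im, Complex.neg_re,
      Complex.neg_im, Complex.I_re, Complex.I_im, Complex.ofReal_re, Complex.ofReal_im,
      Complex.div_re, Complex.div_im, Complex.one_re, Complex.one_im] <;>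
    ring

/-- Let `h` be `C¹` near `0` with `h(0) = 0`, fix `ζ ∈ 𝔻`, and set
`φ(z) = −log(1 − |(ζ − h(z))/(conj(h(z))·ζ − 1)|²)`. Then
`(∂φ/∂z)(0) = −conj(h_z̄(0))·ζ − h_z(0)·conj(ζ)`; in particular, viewed as a function
of `ζ ∈ 𝔻`, the `∂/∂ζ̄`-derivative of `(∂φ/∂z)(0)` is the constant `−h_z(0)`. -/
theorem wirtinger_z_zetabar_of_phi (U : Set ℂ) (hU : IsOpen U) (h0U : (0 : ℂ) ∈ U)
    (h : ℂ → ℂ) (hC1 : ContDiffOn ℝ 1 h U) (hh0 : h 0 = 0)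
    (ζ : ℂ) (hζ : ζ ∈ Metric.ball (0 : ℂ) 1) :
    wirtingerZ (fun z : ℂ =>
        ((-Real.log (1 - ‖(ζ - h z) / ((starRingEnd ℂ) (h z) * ζ - 1)‖ ^ 2) : ℝ) : ℂ)) 0 =
      -(starRingEnd ℂ) (wirtingerZbar h 0) * ζ - wirtingerZ h 0 * (starRingEnd ℂ) ζ ∧
    ∀ w ∈ Metric.ball (0 : ℂ) 1,
      wirtingerZbar (fun w' : ℂ =>
          wirtingerZ (fun z : ℂ =>
            ((-Real.log (1 - ‖(w' - h z) / ((starRingEnd ℂ) (h z) * w' - 1)‖ ^ 2) : ℝ) : ℂ)) 0)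
        w = -(wirtingerZ h 0) := by
  have hζ' : ‖ζ‖ < 1 := by simpa [Metric.mem_ball] using hζ
  refine ⟨part1 U hU h0U h hC1 hh0 ζ hζ', ?_⟩
  intro w hw
  set a := wirtingerZ h 0 with ha
  set b := wirtingerZbar h 0 with hb
  set T : ℂ →L[ℝ] ℂ :=
    (-(starRingEnd ℂ) b) • ContinuousLinearMap.id ℝ ℂ + (-a) • (conjCLE : ℂ →L[ℝ] ℂ) with hT
  have hFT : ∀ w' : ℂ, -(starRingEnd ℂ) b * w' - a * (starRingEnd ℂ) w' = T w' := by
    intro w'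
    simp only [hT, ContinuousLinearMap.add_apply, ContinuousLinearMap.smul_apply,
      ContinuousLinearMap.id_apply, ContinuousLinearEquiv.coe_coe, Complex.conjCLE_apply,
      smul_eq_mul]
    ring
  have heq2 : (fun w' : ℂ =>
        wirtingerZ (fun z : ℂ =>
          ((-Real.log (1 - ‖(w' - h z) / ((starRingEnd ℂ) (h z) * w' - 1)‖ ^ 2) : ℝ) : ℂ)) 0)
      =ᶠ[nhds w] ⇑T := by
    filter_upwards [Metric.isOpen_ball.mem_nhds hw] with w' hw'
    rw [← hFT w']
    exact part1 U hU h0U h hC1 hh0 w' (by simpa [Metric.mem_ball] using hw')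
  rw [wirtingerZbar, heq2.fderiv_eq, T.fderiv]
  simp only [hT, ContinuousLinearMap.add_apply, ContinuousLinearMap.smul_apply,
    ContinuousLinearMap.id_apply, ContinuousLinearEquiv.coe_coe, Complex.conjCLE_apply,
    smul_eq_mul, map_one, Complex.conj_I]
  ring_nf
  rw [Complex.I_sq]
  ring
end

section
/- Let h be a complex-valued function defined and C² on a neighborhood of 0 in ℂ with h(0) = 0 and (∂²h/∂z∂z̄)(0) = 0, and fix ζ ∈ 𝔻. Define φ(z) = −log(1 − |(ζ − h(z))/(conj(h(z))·ζ − 1)|²) for z in a neighborhood of 0 (shrinking the neighborhood so that |h(z)| < 1). Then, writing a = (∂h/∂z)(0) and b = (∂h/∂z̄)(0), the mixed Wirtinger derivative satisfies (∂²φ/∂z∂z̄)(0) = |a|² + |b|² − 2·Re(conj(ζ)²·a·b). -/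
open Complex

noncomputable def dN (u : ℂ) : ℂ →L[ℝ] ℝ :=
  (2*u.re) • Complex.reCLM + (2*u.im) • Complex.imCLM

lemma dN_apply (u w : ℂ) : dN u w = 2*u.re*w.re + 2*u.im*w.im := by
  simp [dN]

lemma hasFDerivAt_normSq (u : ℂ) : HasFDerivAt Complex.normSq (dN u) u := by
  have h : HasFDerivAt (fun z : ℂ => z.re*z.re + z.im*z.im)
      ((u.re • Complex.reCLM + u.re • Complex.reCLM) +
        (u.im • Complex.imCLM + u.im • Complex.imCLM)) u :=
    ((Complex.reCLM.hasFDerivAt.mul Complex.reCLM.hasFDerivAt).add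
      (Complex.imCLM.hasFDerivAt.mul Complex.imCLM.hasFDerivAt))
  rw [show Complex.normSq = fun z : ℂ => z.re*z.re + z.im*z.im from funext Complex.normSq_apply]
  convert h using 1
  ext w
  simp [dN]
  ring

lemma contDiff_normSq : ContDiff ℝ 2 Complex.normSq := by
  rw [show Complex.normSq = fun z : ℂ => z.re*z.re + z.im*z.im from funext Complex.normSq_apply]
  exact (Complex.reCLM.contDiff.mul Complex.reCLM.contDiff).add
    (Complex.imCLM.contDiff.mul Complex.imCLM.contDiff)

noncomputable def cmap (ζ : ℂ) : ℂ →L[ℝ] ℂ :=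
  ((ContinuousLinearMap.mul ℝ ℂ).flip ζ).comp
    (Complex.conjCLE : ℂ ≃L[ℝ] ℂ).toContinuousLinearMap

lemma cmap_apply (ζ w : ℂ) : cmap ζ w = (starRingEnd ℂ) w * ζ := by
  simp [cmap, mul_comm]

noncomputable def Gf (ζ : ℂ) : ℂ → ℝ := fun u =>
  -Real.log (1 - Complex.normSq u) + Real.log (Complex.normSq ((starRingEnd ℂ) u * ζ - 1))
    - Real.log (1 - Complex.normSq ζ)

noncomputable def dG (ζ u : ℂ) : ℂ →L[ℝ] ℝ :=
  (1 - Complex.normSq u)⁻¹ • dN u +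
    (Complex.normSq ((starRingEnd ℂ) u * ζ - 1))⁻¹ •
      ((dN ((starRingEnd ℂ) u * ζ - 1)).comp (cmap ζ))

lemma den_ne (ζ u : ℂ) (hu : Complex.normSq u < 1) (hz : Complex.normSq ζ < 1) :
    (starRingEnd ℂ) u * ζ - 1 ≠ 0 := by
  intro hcontra
  have h1 : (starRingEnd ℂ) u * ζ = 1 := by linear_combination hcontra
  have := congrArg Complex.normSq h1
  rw [Complex.normSq_mul, Complex.normSq_conj, Complex.normSq_one] at this
  nlinarith [Complex.normSq_nonneg u, Complex.normSq_nonneg ζ]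

lemma one_sub_normSq_pos (u : ℂ) (hu : Complex.normSq u < 1) : 0 < 1 - Complex.normSq u := by
  linarith

lemma hasFDerivAt_Gf (ζ u : ℂ) (hu : Complex.normSq u < 1) (hz : Complex.normSq ζ < 1) :
    HasFDerivAt (Gf ζ) (dG ζ u) u := by
  have hc : HasFDerivAt (fun u : ℂ => (starRingEnd ℂ) u * ζ - 1) (cmap ζ) u := by
    have h0 := ((cmap ζ).hasFDerivAt (x := u)).sub_const (1:ℂ)
    have : (fun w : ℂ => cmap ζ w - 1) = fun w : ℂ => (starRingEnd ℂ) w * ζ - 1 := by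
      funext w; rw [cmap_apply]
    rwa [this] at h0
  have h1u : (1 : ℝ) - Complex.normSq u ≠ 0 := (one_sub_normSq_pos u hu).ne'
  have hNc : Complex.normSq ((starRingEnd ℂ) u * ζ - 1) ≠ 0 := by
    simpa [Complex.normSq_eq_zero] using den_ne ζ u hu hz
  have hlog1 : HasFDerivAt (fun u : ℂ => Real.log (1 - Complex.normSq u))
      ((1 - Complex.normSq u)⁻¹ • -(dN u)) u :=
    HasFDerivAt.log ((hasFDerivAt_normSq u).const_sub 1) h1u
  have hlog2 : HasFDerivAt (fun u : ℂ => Real.log (Complex.normSq ((starRingEnd ℂ) u * ζ - 1)))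
      ((Complex.normSq ((starRingEnd ℂ) u * ζ - 1))⁻¹ •
        ((dN ((starRingEnd ℂ) u * ζ - 1)).comp (cmap ζ))) u :=
    HasFDerivAt.log ((hasFDerivAt_normSq _).comp u hc) hNc
  have htot := (hlog1.neg.add hlog2).sub_const (Real.log (1 - Complex.normSq ζ))
  have e : dG ζ u = -((1 - Complex.normSq u)⁻¹ • -(dN u)) +
      (Complex.normSq ((starRingEnd ℂ) u * ζ - 1))⁻¹ •
        ((dN ((starRingEnd ℂ) u * ζ - 1)).comp (cmap ζ)) := by
    ext w
    simp [dG]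
  rw [e]
  exact htot

lemma contDiffAt_Gf (ζ u : ℂ) (hu : Complex.normSq u < 1) (hz : Complex.normSq ζ < 1) :
    ContDiffAt ℝ 2 (Gf ζ) u := by
  have h1u : (1 : ℝ) - Complex.normSq u ≠ 0 := (one_sub_normSq_pos u hu).ne'
  have hNc : Complex.normSq ((starRingEnd ℂ) u * ζ - 1) ≠ 0 := by
    simpa [Complex.normSq_eq_zero] using den_ne ζ u hu hz
  have hcd : ContDiffAt ℝ 2 (fun u : ℂ => (starRingEnd ℂ) u * ζ - 1) u := by
    have h0 : ContDiff ℝ 2 (fun w : ℂ => cmap ζ w - 1) := ((cmap ζ).contDiff (n := 2)).sub (contDiff_const (c := (1:ℂ)))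
    have he : (fun w : ℂ => cmap ζ w - 1) = fun w : ℂ => (starRingEnd ℂ) w * ζ - 1 := by
      funext w; rw [cmap_apply]
    exact (he ▸ h0).contDiffAt
  have c1 : ContDiffAt ℝ 2 (fun u : ℂ => Real.log (1 - Complex.normSq u)) u :=
    ContDiffAt.log ((contDiff_const.sub contDiff_normSq).contDiffAt) h1u
  have c2 : ContDiffAt ℝ 2
      (fun u : ℂ => Real.log (Complex.normSq ((starRingEnd ℂ) u * ζ - 1))) u :=
    ContDiffAt.log ((contDiff_normSq.contDiffAt).comp u hcd) hNc
  exact (c1.neg.add c2).sub contDiffAt_const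

lemma hasFDerivAt_cfun (ζ u : ℂ) :
    HasFDerivAt (fun u : ℂ => (starRingEnd ℂ) u * ζ - 1) (cmap ζ) u := by
  have h0 := ((cmap ζ).hasFDerivAt (x := u)).sub_const (1:ℂ)
  have : (fun w : ℂ => cmap ζ w - 1) = fun w : ℂ => (starRingEnd ℂ) w * ζ - 1 := by
    funext w; rw [cmap_apply]
  rwa [this] at h0

lemma g''_apply (ζ : ℂ) (hz : Complex.normSq ζ < 1) (v w : ℂ) :
    fderiv ℝ (fderiv ℝ (fun u : ℂ => ((Gf ζ u : ℝ) : ℂ))) 0 v w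
      = ((dN w v + dN (cmap ζ w) (cmap ζ v)
          - 4 * (cmap ζ w).re * (cmap ζ v).re : ℝ) : ℂ) := by
  set g := fun u : ℂ => ((Gf ζ u : ℝ) : ℂ) with hg
  have hball : {u : ℂ | Complex.normSq u < 1} ∈ nhds (0 : ℂ) := by
    refine (isOpen_lt Complex.continuous_normSq continuous_const).mem_nhds ?_
    simp
  have hgd : ∀ u : ℂ, Complex.normSq u < 1 →
      HasFDerivAt g (Complex.ofRealCLM.comp (dG ζ u)) u := fun u hu =>
    Complex.ofRealCLM.hasFDerivAt.comp u (hasFDerivAt_Gf ζ u hu hz)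
  have hfe : (fun u : ℂ => fderiv ℝ g u w) =ᶠ[nhds (0:ℂ)]
      (fun u : ℂ => ((dG ζ u w : ℝ) : ℂ)) := by
    filter_upwards [hball] with u hu
    rw [(hgd u hu).fderiv]
    simp
  have gC2 : ContDiffAt ℝ 2 g 0 :=
    Complex.ofRealCLM.contDiff.comp_contDiffAt 0 (contDiffAt_Gf ζ 0 (by simp) hz)
  have hg'd : DifferentiableAt ℝ (fderiv ℝ g) 0 :=
    (gC2.fderiv_right (m := 1) (by norm_num)).differentiableAt one_ne_zero
  -- express f'' v w as fderiv of scalar function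
  have h6 : fderiv ℝ (fun u : ℂ => fderiv ℝ g u w) 0 v
      = fderiv ℝ (fderiv ℝ g) 0 v w := by
    rw [fderiv_clm_apply hg'd (differentiableAt_const w)]
    simp
  rw [← h6, hfe.fderiv_eq]
  -- now compute the explicit derivative
  have hc0 := hasFDerivAt_cfun ζ 0
  have hA1 : HasFDerivAt (fun u : ℂ => (1 - Complex.normSq u)⁻¹)
      ((-((1 - Complex.normSq (0:ℂ)) ^ 2)⁻¹ : ℝ) • -(dN 0)) 0 := by
    have := (hasDerivAt_inv (x := 1 - Complex.normSq (0:ℂ)) (by simp)).comp_hasFDerivAt 0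
      ((hasFDerivAt_normSq (0:ℂ)).const_sub 1)
    simpa [Function.comp_def] using this
  have hNin := (hasFDerivAt_normSq ((starRingEnd ℂ) (0:ℂ) * ζ - 1)).comp 0 hc0
  have hB1 : HasFDerivAt (fun u : ℂ => (Complex.normSq ((starRingEnd ℂ) u * ζ - 1))⁻¹)
      ((-((Complex.normSq ((starRingEnd ℂ) (0:ℂ) * ζ - 1)) ^ 2)⁻¹ : ℝ) •
        ((dN ((starRingEnd ℂ) (0:ℂ) * ζ - 1)).comp (cmap ζ))) 0 := by
    have := (hasDerivAt_inv (x := Complex.normSq ((starRingEnd ℂ) (0:ℂ) * ζ - 1))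
      (by simp)).comp_hasFDerivAt 0 hNin
    rw [show (-((Complex.normSq ((starRingEnd ℂ) (0:ℂ) * ζ - 1)) ^ 2)⁻¹ : ℝ) = -1 by simp] at this ⊢
    simpa only [Function.comp_def] using this
  have H := (hA1.mul ((dN w).hasFDerivAt (x := (0:ℂ)))).add
    (hB1.mul (((dN (cmap ζ w)).hasFDerivAt (x := ((starRingEnd ℂ) (0:ℂ) * ζ - 1))).comp 0 hc0))
  have H2 := Complex.ofRealCLM.hasFDerivAt.comp 0 H
  have H3 : HasFDerivAt (fun u : ℂ => ((dG ζ u w : ℝ) : ℂ)) _ 0 :=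
    H2.congr_of_eventuallyEq (Filter.Eventually.of_forall (fun u => by
      simp only [Function.comp_def, Complex.ofRealCLM_apply]
      norm_cast
      simp [dG, dN_apply, cmap_apply]
      try ring))
  rw [H3.fderiv]
  simp [dN_apply, cmap_apply]
  ring

lemma sndWirt (f : ℂ → ℂ) (hf : ContDiffAt ℝ 2 f 0) :
    wirtingerZ (fun z => wirtingerZbar f z) 0 =
      (1/4) * (fderiv ℝ (fderiv ℝ f) 0 1 1 + fderiv ℝ (fderiv ℝ f) 0 Complex.I Complex.I) := by
  have hdF : HasFDerivAt (fderiv ℝ f) (fderiv ℝ (fderiv ℝ f) 0) 0 :=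
    ((hf.fderiv_right (m := 1) (by norm_num)).differentiableAt one_ne_zero).hasFDerivAt
  set F'' := fderiv ℝ (fderiv ℝ f) 0 with hF''
  have h1 : HasFDerivAt (fun z => fderiv ℝ f z 1)
      ((fderiv ℝ f 0).comp (0 : ℂ →L[ℝ] ℂ) + F''.flip 1) 0 :=
    hdF.clm_apply (hasFDerivAt_const 1 0)
  have hI : HasFDerivAt (fun z => fderiv ℝ f z Complex.I)
      ((fderiv ℝ f 0).comp (0 : ℂ →L[ℝ] ℂ) + F''.flip Complex.I) 0 :=
    hdF.clm_apply (hasFDerivAt_const Complex.I 0)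
  have hψ : HasFDerivAt (fun z => wirtingerZbar f z)
      ((1/2 : ℂ) • (((fderiv ℝ f 0).comp (0 : ℂ →L[ℝ] ℂ) + F''.flip 1) +
        Complex.I • ((fderiv ℝ f 0).comp (0 : ℂ →L[ℝ] ℂ) + F''.flip Complex.I))) 0 := by
    have := (h1.add (hI.const_mul Complex.I)).const_mul (1/2 : ℂ)
    simpa [wirtingerZbar, smul_smul] using this
  have hsymm : F'' 1 Complex.I = F'' Complex.I 1 := hf.isSymmSndFDerivAt (by simp [minSmoothness_of_isRCLikeNormedField]) 1 Complex.I
  rw [wirtingerZ, hψ.fderiv]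
  simp only [ContinuousLinearMap.add_apply, ContinuousLinearMap.smul_apply,
    ContinuousLinearMap.comp_apply, ContinuousLinearMap.zero_apply, map_zero,
    ContinuousLinearMap.flip_apply, smul_eq_mul]
  rw [hsymm]
  ring_nf
  rw [Complex.I_sq]
  ring

lemma phi_eq (ζ u : ℂ) (hu : Complex.normSq u < 1) (hz : Complex.normSq ζ < 1) :
    ((-Real.log (1 - ‖(ζ - u) / ((starRingEnd ℂ) u * ζ - 1)‖ ^ 2) : ℝ) : ℂ)
      = ((Gf ζ u : ℝ) : ℂ) := by
  norm_cast
  have hd := den_ne ζ u hu hz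
  have hD : 0 < Complex.normSq ((starRingEnd ℂ) u * ζ - 1) := Complex.normSq_pos.mpr hd
  have hnorm : ‖(ζ - u) / ((starRingEnd ℂ) u * ζ - 1)‖ ^ 2
      = Complex.normSq (ζ - u) / Complex.normSq ((starRingEnd ℂ) u * ζ - 1) := by
    rw [Complex.sq_norm, map_div₀]
  have key : Complex.normSq ((starRingEnd ℂ) u * ζ - 1) - Complex.normSq (ζ - u)
      = (1 - Complex.normSq u) * (1 - Complex.normSq ζ) := by
    simp [Complex.normSq_apply, Complex.sub_re, Complex.sub_im, Complex.mul_re,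
      Complex.mul_im, Complex.one_re, Complex.one_im]
    ring
  have hru : 0 < 1 - Complex.normSq u := one_sub_normSq_pos u hu
  have hrz : 0 < 1 - Complex.normSq ζ := one_sub_normSq_pos ζ hz
  have hmain : 1 - ‖(ζ - u) / ((starRingEnd ℂ) u * ζ - 1)‖ ^ 2
      = ((1 - Complex.normSq u) * (1 - Complex.normSq ζ))
          / Complex.normSq ((starRingEnd ℂ) u * ζ - 1) := by
    rw [hnorm, eq_div_iff hD.ne', sub_mul, div_mul_cancel₀ _ hD.ne']
    linarith [key]
  rw [hmain, Real.log_div (by positivity) hD.ne', Real.log_mul hru.ne' hrz.ne', Gf]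
  ring

lemma normSq_lt_one_of_mem_ball (ζ : ℂ) (hζ : ζ ∈ Metric.ball (0 : ℂ) 1) :
    Complex.normSq ζ < 1 := by
  have h1 : ‖ζ‖ < 1 := by simpa using Metric.mem_ball.mp hζ
  have h2 : Complex.normSq ζ = ‖ζ‖ ^ 2 := by
    rw [Complex.sq_norm]
  rw [h2]
  nlinarith [norm_nonneg ζ]

/-- Let `h` be `C²` near `0` with `h(0) = 0` and `h_{zz̄}(0) = 0`, fix `ζ ∈ 𝔻`, and set
`φ(z) = −log(1 − |(ζ − h(z))/(conj(h(z))·ζ − 1)|²)`. Then, with `a = h_z(0)` and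
`b = h_z̄(0)`, one has `(∂²φ/∂z∂z̄)(0) = |a|² + |b|² − 2·Re(conj(ζ)²·a·b)`. -/
theorem wirtinger_mixed_second_of_phi (U : Set ℂ) (hU : IsOpen U) (h0U : (0 : ℂ) ∈ U)
    (h : ℂ → ℂ) (hC2 : ContDiffOn ℝ 2 h U) (hh0 : h 0 = 0)
    (hharm : wirtingerZ (fun z => wirtingerZbar h z) 0 = 0)
    (ζ : ℂ) (hζ : ζ ∈ Metric.ball (0 : ℂ) 1) :
    wirtingerZ (fun z : ℂ =>
        wirtingerZbar (fun z' : ℂ =>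
          ((-Real.log (1 - ‖(ζ - h z') / ((starRingEnd ℂ) (h z') * ζ - 1)‖ ^ 2) : ℝ) : ℂ)) z) 0 =
      ((‖wirtingerZ h 0‖ ^ 2 + ‖wirtingerZbar h 0‖ ^ 2 -
        2 * ((starRingEnd ℂ) ζ ^ 2 * wirtingerZ h 0 * wirtingerZbar h 0).re : ℝ) : ℂ) := by
  have hζ2 : Complex.normSq ζ < 1 := normSq_lt_one_of_mem_ball ζ hζ
  set g : ℂ → ℂ := fun u : ℂ => ((Gf ζ u : ℝ) : ℂ) with hgdef
  set φ : ℂ → ℂ := fun z : ℂ => g (h z) with hφdef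
  set V : Set ℂ := U ∩ h ⁻¹' {w : ℂ | Complex.normSq w < 1} with hVdef
  have hVopen : IsOpen V :=
    hC2.continuousOn.isOpen_inter_preimage hU
      (isOpen_lt Complex.continuous_normSq continuous_const)
  have hV0 : (0 : ℂ) ∈ V := by
    constructor
    · exact h0U
    · simp [hh0]
  have hVnhds : V ∈ nhds (0 : ℂ) := hVopen.mem_nhds hV0
  have hhC2 : ContDiffAt ℝ 2 h 0 := hC2.contDiffAt (hU.mem_nhds h0U)
  have gC2 : ContDiffAt ℝ 2 g 0 :=
    Complex.ofRealCLM.contDiff.comp_contDiffAt 0 (contDiffAt_Gf ζ 0 (by simp) hζ2)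
  have hpt : ∀ z ∈ V, ((-Real.log (1 - ‖(ζ - h z) / ((starRingEnd ℂ) (h z) * ζ - 1)‖ ^ 2)
      : ℝ) : ℂ) = φ z := fun z hz => phi_eq ζ (h z) hz.2 hζ2
  have hstep1 : wirtingerZ (fun z : ℂ =>
      wirtingerZbar (fun z' : ℂ =>
        ((-Real.log (1 - ‖(ζ - h z') / ((starRingEnd ℂ) (h z') * ζ - 1)‖ ^ 2) : ℝ) : ℂ)) z) 0
      = wirtingerZ (fun z => wirtingerZbar φ z) 0 := by
    have hev : (fun z : ℂ => wirtingerZbar (fun z' : ℂ =>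
        ((-Real.log (1 - ‖(ζ - h z') / ((starRingEnd ℂ) (h z') * ζ - 1)‖ ^ 2) : ℝ) : ℂ)) z)
        =ᶠ[nhds (0:ℂ)] (fun z => wirtingerZbar φ z) := by
      filter_upwards [hVnhds] with z hzV
      have hloc : (fun z' : ℂ =>
          ((-Real.log (1 - ‖(ζ - h z') / ((starRingEnd ℂ) (h z') * ζ - 1)‖ ^ 2) : ℝ) : ℂ))
          =ᶠ[nhds z] φ := by
        filter_upwards [hVopen.mem_nhds hzV] with z' hz'V using hpt z' hz'V
      simp only [wirtingerZbar, hloc.fderiv_eq]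
    simp only [wirtingerZ, hev.fderiv_eq]
  rw [hstep1]
  have gC2' : ContDiffAt ℝ 2 g (h 0) := by rwa [hh0]
  have hφC2 : ContDiffAt ℝ 2 φ 0 := by
    have := gC2'.comp 0 hhC2
    simpa [Function.comp_def] using this
  rw [sndWirt φ hφC2]
  have hsum : fderiv ℝ (fderiv ℝ h) 0 1 1 + fderiv ℝ (fderiv ℝ h) 0 Complex.I Complex.I
      = 0 := by
    have h4 := (sndWirt h hhC2).symm.trans hharm
    field_simp at h4
    linear_combination h4
  have hDh0 : HasFDerivAt h (fderiv ℝ h 0) 0 :=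
    (hhC2.differentiableAt (by norm_num)).hasFDerivAt
  have hg' : HasFDerivAt (fderiv ℝ g) (fderiv ℝ (fderiv ℝ g) 0) (h 0) := by
    rw [hh0]
    exact ((gC2.fderiv_right (m := 1) (by norm_num)).differentiableAt one_ne_zero).hasFDerivAt
  have hcA : HasFDerivAt (fun z => fderiv ℝ g (h z))
      ((fderiv ℝ (fderiv ℝ g) 0).comp (fderiv ℝ h 0)) 0 := by
    have := hg'.comp 0 hDh0
    simpa [Function.comp_def] using this
  have hdB : HasFDerivAt (fderiv ℝ h) (fderiv ℝ (fderiv ℝ h) 0) 0 :=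
    ((hhC2.fderiv_right (m := 1) (by norm_num)).differentiableAt one_ne_zero).hasFDerivAt
  have Hcomp := hcA.clm_comp hdB
  have heq : fderiv ℝ φ =ᶠ[nhds (0:ℂ)]
      (fun z => (fderiv ℝ g (h z)).comp (fderiv ℝ h z)) := by
    filter_upwards [hVnhds] with z hzV
    have hgd : DifferentiableAt ℝ g (h z) :=
      (Complex.ofRealCLM.hasFDerivAt.comp (h z)
        (hasFDerivAt_Gf ζ (h z) hzV.2 hζ2)).differentiableAt
    have hhd : DifferentiableAt ℝ h z :=
      (hC2.contDiffAt (hU.mem_nhds hzV.1)).differentiableAt (by norm_num)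
    have hcmp := fderiv_comp z hgd hhd
    simpa [Function.comp_def] using hcmp
  have HΦ := Hcomp.congr_of_eventuallyEq heq
  rw [HΦ.fderiv]
  simp only [ContinuousLinearMap.add_apply, ContinuousLinearMap.comp_apply,
    ContinuousLinearMap.compL_apply, ContinuousLinearMap.flip_apply]
  rw [show ∀ A B C D : ℂ, A + B + (C + D) = A + C + (B + D) from by intros; ring]
  rw [← map_add, hsum, map_zero, zero_add]
  rw [hgdef]
  rw [g''_apply ζ hζ2 (fderiv ℝ h 0 1) (fderiv ℝ h 0 1),
    g''_apply ζ hζ2 (fderiv ℝ h 0 Complex.I) (fderiv ℝ h 0 Complex.I)]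
  set p : ℂ := fderiv ℝ h 0 1 with hp
  set q : ℂ := fderiv ℝ h 0 Complex.I with hq
  simp only [wirtingerZ, wirtingerZbar, ← hp, ← hq, dN_apply, cmap_apply]
  have hnorm : ∀ z : ℂ, ‖z‖ ^ 2 = z.re * z.re + z.im * z.im := fun z => by
    rw [Complex.sq_norm, Complex.normSq_apply]
  rw [hnorm, hnorm]
  apply Complex.ext <;>
    · simp [Complex.mul_re, Complex.mul_im, Complex.normSq_apply, pow_two]
      try ring
end

section
/- For all a, b, ζ ∈ ℂ with |ζ| < 1, the following identity holds: (|a|² + |b|² − 2·Re(conj(ζ)²·a·b))·(1 − |ζ|²)^{−2} − |a|² = (1 − |ζ|²)^{−2}·( 2|ζ|²(1 − |ζ|²)|a|² + |conj(ζ)²·a − conj(b)|² ). -/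
open Complex

/-- The determinant identity for the Levi form: for all `a, b, ζ ∈ ℂ` with `|ζ| < 1`,
`(|a|² + |b|² − 2·Re(conj(ζ)²·a·b))·(1 − |ζ|²)^{−2} − |a|²
  = (1 − |ζ|²)^{−2}·(2|ζ|²(1 − |ζ|²)|a|² + |conj(ζ)²·a − conj(b)|²)`. -/
theorem levi_determinant_identity (a b ζ : ℂ) (hζ : ‖ζ‖ < 1) :
    (‖a‖ ^ 2 + ‖b‖ ^ 2 - 2 * ((starRingEnd ℂ) ζ ^ 2 * a * b).re) *
        ((1 - ‖ζ‖ ^ 2) ^ 2)⁻¹ - ‖a‖ ^ 2 =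
      ((1 - ‖ζ‖ ^ 2) ^ 2)⁻¹ *
        (2 * ‖ζ‖ ^ 2 * (1 - ‖ζ‖ ^ 2) * ‖a‖ ^ 2 +
          ‖(starRingEnd ℂ) ζ ^ 2 * a - (starRingEnd ℂ) b‖ ^ 2) := by
  have h1 : (0:ℝ) < 1 - ‖ζ‖ ^ 2 := by nlinarith [norm_nonneg ζ]
  have hz : (1 - ‖ζ‖ ^ 2) ^ 2 ≠ 0 := pow_ne_zero 2 h1.ne'
  simp only [Complex.sq_norm] at *
  simp only [pow_two, Complex.normSq_apply, Complex.mul_re, Complex.mul_im, Complex.sub_re,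
    Complex.sub_im, Complex.conj_re, Complex.conj_im] at *
  have h2 : (1:ℝ) - (ζ.re ^ 2 + ζ.im ^ 2) ≠ 0 := by rw [sq, sq]; exact h1.ne'
  field_simp
  ring
end

section
/- For all a, b, ζ ∈ ℂ with 0 < |ζ| < 1 and a ≠ 0, setting A = |a|² + |b|² − 2·Re(conj(ζ)²·a·b), one has A > 0 and A·(1 − |ζ|²)^{−2} − |a|² > 0; that is, the 2×2 Hermitian matrix with diagonal entries A and (1 − |ζ|²)^{−2} and off-diagonal entries −a and −conj(a) is positive definite. -/
open Complex
open scoped ComplexOrder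

lemma levi_key_ineq (x y t : ℝ) (hx : 0 < x) (ht : 0 < t) (ht1 : t < 1) :
    x ^ 2 * (1 - t) ^ 2 < x ^ 2 + y ^ 2 - 2 * t * x * y := by
  nlinarith [sq_nonneg (y - t * x), mul_pos (mul_pos ht (sub_pos.2 ht1)) (pow_pos hx 2)]

lemma levi_quad_pos (A C r u v : ℝ) (hA : 0 < A) (hC : 0 < C) (hr : r ^ 2 < A * C)
    (huv : 0 < u ∨ 0 < v) (hv : 0 ≤ v) :
    0 < A * u ^ 2 + C * v ^ 2 - 2 * r * u * v := by
  rcases eq_or_lt_of_le hv with rfl | hv0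
  · have hu0 : 0 < u := by rcases huv with h | h; exact h; exact absurd h (by simp)
    nlinarith [mul_pos hA (pow_pos hu0 2)]
  · nlinarith [sq_nonneg (C * v - r * u), sq_nonneg (A * u - r * v),
      mul_pos hC (pow_pos hv0 2), sq_nonneg u, sq_nonneg v]

/-- Positivity of the Levi form: for `a, b, ζ ∈ ℂ` with `0 < |ζ| < 1` and `a ≠ 0`,
setting `A = |a|² + |b|² − 2·Re(conj(ζ)²·a·b)`, one has `A > 0` and
`A·(1 − |ζ|²)^{−2} − |a|² > 0`; that is, the `2×2` Hermitian matrix with diagonal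
entries `A`, `(1 − |ζ|²)^{−2}` and off-diagonal entries `−a`, `−conj(a)` is positive
definite. -/
theorem levi_form_posDef (a b ζ : ℂ) (hζ0 : 0 < ‖ζ‖) (hζ1 : ‖ζ‖ < 1) (ha : a ≠ 0) :
    0 < ‖a‖ ^ 2 + ‖b‖ ^ 2 - 2 * ((starRingEnd ℂ) ζ ^ 2 * a * b).re ∧
    0 < (‖a‖ ^ 2 + ‖b‖ ^ 2 - 2 * ((starRingEnd ℂ) ζ ^ 2 * a * b).re) *
          ((1 - ‖ζ‖ ^ 2) ^ 2)⁻¹ - ‖a‖ ^ 2 ∧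
    Matrix.PosDef
      !![((‖a‖ ^ 2 + ‖b‖ ^ 2 - 2 * ((starRingEnd ℂ) ζ ^ 2 * a * b).re : ℝ) : ℂ), -a;
         -(starRingEnd ℂ) a, ((((1 - ‖ζ‖ ^ 2) ^ 2)⁻¹ : ℝ) : ℂ)] := by
  set A : ℝ := ‖a‖ ^ 2 + ‖b‖ ^ 2 - 2 * ((starRingEnd ℂ) ζ ^ 2 * a * b).re with hA_def
  set C : ℝ := ((1 - ‖ζ‖ ^ 2) ^ 2)⁻¹ with hC_def
  have ha0 : 0 < ‖a‖ := norm_pos_iff.2 ha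
  have ht : 0 < ‖ζ‖ ^ 2 := pow_pos hζ0 2
  have ht1 : ‖ζ‖ ^ 2 < 1 := by nlinarith
  have h1t : 0 < 1 - ‖ζ‖ ^ 2 := by linarith
  have hsq : 0 < (1 - ‖ζ‖ ^ 2) ^ 2 := pow_pos h1t 2
  have hC : 0 < C := inv_pos.2 hsq
  -- bound on the real part term
  have hre_bound : ((starRingEnd ℂ) ζ ^ 2 * a * b).re ≤ ‖ζ‖ ^ 2 * ‖a‖ * ‖b‖ := by
    calc ((starRingEnd ℂ) ζ ^ 2 * a * b).re ≤ ‖(starRingEnd ℂ) ζ ^ 2 * a * b‖ :=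
          (le_abs_self _).trans (Complex.abs_re_le_norm _)
      _ = ‖ζ‖ ^ 2 * ‖a‖ * ‖b‖ := by
          simp [norm_mul, norm_pow]
  have hAkey : ‖a‖ ^ 2 * (1 - ‖ζ‖ ^ 2) ^ 2 < A := by
    have := levi_key_ineq ‖a‖ ‖b‖ (‖ζ‖ ^ 2) ha0 ht ht1
    have hb0 : 0 ≤ ‖b‖ := norm_nonneg _
    rw [hA_def]
    nlinarith
  have hA : 0 < A := lt_trans (by positivity) hAkey
  have hAC : ‖a‖ ^ 2 < A * C := by
    rw [hC_def, lt_mul_inv_iff₀ hsq]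
    nlinarith
  have h2 : 0 < A * C - ‖a‖ ^ 2 := by linarith
  refine ⟨hA, h2, Matrix.PosDef.of_dotProduct_mulVec_pos ?_ ?_⟩
  · -- Hermitian
    ext i j
    fin_cases i <;> fin_cases j <;>
      simp [Matrix.conjTranspose_apply, Complex.conj_ofReal]
  · -- positivity
    intro v hv
    have hvne : v 0 ≠ 0 ∨ v 1 ≠ 0 := by
      by_contra h
      push_neg at h
      refine hv (funext fun i => ?_)
      fin_cases i
      · simpa using h.1
      · simpa using h.2
    have hre : 0 < A * ‖v 0‖ ^ 2 + C * ‖v 1‖ ^ 2 - 2 * ‖a‖ * ‖v 0‖ * ‖v 1‖ :=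
      levi_quad_pos A C ‖a‖ ‖v 0‖ ‖v 1‖ hA hC hAC
        (by rcases hvne with h | h
            · exact Or.inl (norm_pos_iff.2 h)
            · exact Or.inr (norm_pos_iff.2 h)) (norm_nonneg _)
    have hw : (a * (starRingEnd ℂ) (v 0) * v 1).re ≤ ‖a‖ * ‖v 0‖ * ‖v 1‖ := by
      calc (a * (starRingEnd ℂ) (v 0) * v 1).re ≤ ‖a * (starRingEnd ℂ) (v 0) * v 1‖ :=
            (le_abs_self _).trans (Complex.abs_re_le_norm _)
        _ = ‖a‖ * ‖v 0‖ * ‖v 1‖ := by simp [norm_mul]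
    rw [Complex.lt_def]
    constructor
    · have hzre : (dotProduct (star v)
          ((!![((A : ℝ) : ℂ), -a; -(starRingEnd ℂ) a, ((C : ℝ) : ℂ)]).mulVec v)).re =
          A * ‖v 0‖ ^ 2 + C * ‖v 1‖ ^ 2 - 2 * (a * (starRingEnd ℂ) (v 0) * v 1).re := by
        simp [dotProduct, Matrix.mulVec, Fin.sum_univ_two, Complex.add_re,
          Complex.mul_re, Complex.mul_im, Complex.sq_norm,
          Complex.normSq_apply]
        ring
      rw [Complex.zero_re, hzre]
      linarith
    · simp [dotProduct, Matrix.mulVec, Fin.sum_univ_two, Complex.add_im,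
        Complex.mul_re, Complex.mul_im]
      ring
end
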